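/- Let n ∈ ℕ, A ∈ ℝ^{n×n}, B ∈ ℝⁿ, c ∈ ℝⁿ, D ∈ ℝ, and let α > 0. Suppose there exists a symmetric positive-definite X ∈ ℝ^{n×n} such that the symmetric (n+2)×(n+2) block matrix with row/column blocks of sizes (n,1,1) and entries: (1,1) = AᵀXA − X, (1,2) = AᵀXB, (1,3) = c, (2,2) = BᵀXB − α², (2,3) = D, (3,3) = −1, is negative definite. Then for every input u : ℕ → ℝ and the trajectory with x(0) = 0, x(t+1) = A x(t) + B u(t), y(t) = cᵀ x(t) + D u(t), one has Σ_{t=0}^{t_f} y(t)² ≤ α² Σ_{t=0}^{t_f} u(t)² for every t_f ∈ ℕ; that is, the system has ℓ₂ gain at most α. -/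

import Mathlib

open Matrix

lemma quadform (n : ℕ) (A X : Matrix (Fin n) (Fin n) ℝ) (B c : Fin n → ℝ)
    (D α : ℝ) (hXh : X.IsHermitian) (xv : Fin n → ℝ) (uv w : ℝ) :
    (Sum.elim (Sum.elim xv (fun _ : Fin 1 => uv)) (fun _ : Fin 1 => w)) ⬝ᵥ
      ((Matrix.fromBlocks
        (Matrix.fromBlocks
          (Aᵀ * X * A - X)
          (Matrix.of fun i (_ : Fin 1) => Aᵀ.mulVec (X.mulVec B) i)
          (Matrix.of fun (_ : Fin 1) j => Aᵀ.mulVec (X.mulVec B) j)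
          (Matrix.of fun (_ _ : Fin 1) => B ⬝ᵥ X.mulVec B - α ^ 2))
        (Matrix.of fun (i : Fin n ⊕ Fin 1) (_ : Fin 1) =>
          Sum.elim (fun j => c j) (fun _ => D) i)
        (Matrix.of fun (_ : Fin 1) (j : Fin n ⊕ Fin 1) =>
          Sum.elim (fun j => c j) (fun _ => D) j)
        (Matrix.of fun (_ _ : Fin 1) => (-1 : ℝ))).mulVec
        (Sum.elim (Sum.elim xv (fun _ : Fin 1 => uv)) (fun _ : Fin 1 => w))) =
    (A.mulVec xv + uv • B) ⬝ᵥ X.mulVec (A.mulVec xv + uv • B)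
      - xv ⬝ᵥ X.mulVec xv - α ^ 2 * uv ^ 2
      + 2 * w * (c ⬝ᵥ xv + D * uv) - w ^ 2 := by
  have hXt : Xᵀ = X := by
    ext i j; simpa using congrFun (congrFun hXh.eq i) j
  have hAdot : ∀ v : Fin n → ℝ, xv ⬝ᵥ Aᵀ.mulVec v = (A.mulVec xv) ⬝ᵥ v := by
    intro v; rw [dotProduct_mulVec, vecMul_transpose]
  have hBXA : B ⬝ᵥ X.mulVec (A.mulVec xv) = (A.mulVec xv) ⬝ᵥ X.mulVec B := by
    rw [dotProduct_comm, dotProduct_mulVec, ← vecMul_transpose, hXt]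
  have e1 : (Matrix.of fun i (_ : Fin 1) => Aᵀ.mulVec (X.mulVec B) i).mulVec
      (fun _ : Fin 1 => uv) = uv • Aᵀ.mulVec (X.mulVec B) := by
    ext i
    simp only [Matrix.mulVec, dotProduct, Fin.sum_univ_one, Matrix.of_apply,
      Pi.smul_apply, smul_eq_mul, mul_comm]
  have e2 : (Matrix.of fun (_ : Fin 1) j => Aᵀ.mulVec (X.mulVec B) j).mulVec xv
      = fun _ : Fin 1 => Aᵀ.mulVec (X.mulVec B) ⬝ᵥ xv := by
    ext i; simp [Matrix.mulVec, dotProduct]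
  have e3 : (Matrix.of fun (_ _ : Fin 1) => B ⬝ᵥ X.mulVec B - α ^ 2).mulVec
      (fun _ : Fin 1 => uv) = fun _ : Fin 1 => (B ⬝ᵥ X.mulVec B - α ^ 2) * uv := by
    ext i; simp [Matrix.mulVec, dotProduct]
  have e4 : (Matrix.of fun (i : Fin n ⊕ Fin 1) (_ : Fin 1) =>
        Sum.elim (fun j => c j) (fun _ => D) i).mulVec (fun _ : Fin 1 => w)
      = Sum.elim (fun j => c j * w) (fun _ : Fin 1 => D * w) := by
    ext i; cases i <;> simp [Matrix.mulVec, dotProduct]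
  have e5 : (Matrix.of fun (_ : Fin 1) (j : Fin n ⊕ Fin 1) =>
        Sum.elim (fun j => c j) (fun _ => D) j).mulVec
        (Sum.elim xv (fun _ : Fin 1 => uv))
      = fun _ : Fin 1 => c ⬝ᵥ xv + D * uv := by
    ext i; simp [Matrix.mulVec, dotProduct, Fintype.sum_sum_type]
  have e6 : (Matrix.of fun (_ _ : Fin 1) => (-1 : ℝ)).mulVec (fun _ : Fin 1 => w)
      = fun _ : Fin 1 => -w := by
    ext i; simp [Matrix.mulVec, dotProduct]
  rw [fromBlocks_mulVec, fromBlocks_mulVec]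
  simp only [Sum.elim_comp_inl, Sum.elim_comp_inr]
  rw [e1, e2, e3, e4, e5, e6]
  rw [sumElim_dotProduct_sumElim]
  have hsplit : (Sum.elim ((Aᵀ * X * A - X).mulVec xv + uv • Aᵀ.mulVec (X.mulVec B))
        ((fun _ : Fin 1 => Aᵀ.mulVec (X.mulVec B) ⬝ᵥ xv) + fun _ => (B ⬝ᵥ X.mulVec B - α ^ 2) * uv)
      + Sum.elim (fun j => c j * w) (fun _ : Fin 1 => D * w))
      = Sum.elim ((Aᵀ * X * A - X).mulVec xv + uv • Aᵀ.mulVec (X.mulVec B) + fun j => c j * w)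
        (fun _ : Fin 1 => Aᵀ.mulVec (X.mulVec B) ⬝ᵥ xv + (B ⬝ᵥ X.mulVec B - α ^ 2) * uv + D * w) := by
    ext i; cases i <;> simp
  rw [hsplit, sumElim_dotProduct_sumElim]
  have hdotc : ∀ a s : ℝ, (fun _ : Fin 1 => a) ⬝ᵥ (fun _ : Fin 1 => s) = a * s := by
    intro a s; simp [dotProduct]
  simp only [dotProduct_add, dotProduct_smul, smul_eq_mul, Pi.add_apply]
  rw [hdotc, hdotc, hdotc]
  have h11 : xv ⬝ᵥ (Aᵀ * X * A - X).mulVec xv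
      = (A.mulVec xv) ⬝ᵥ X.mulVec (A.mulVec xv) - xv ⬝ᵥ X.mulVec xv := by
    rw [sub_mulVec, dotProduct_sub, ← mulVec_mulVec, ← mulVec_mulVec, hAdot]
  have h12 : xv ⬝ᵥ Aᵀ.mulVec (X.mulVec B) = (A.mulVec xv) ⬝ᵥ X.mulVec B := hAdot _
  have h21 : Aᵀ.mulVec (X.mulVec B) ⬝ᵥ xv = (A.mulVec xv) ⬝ᵥ X.mulVec B := by
    rw [dotProduct_comm]; exact hAdot _
  have hcw : xv ⬝ᵥ (fun j => c j * w) = (c ⬝ᵥ xv) * w := by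
    simp only [dotProduct, Finset.sum_mul]
    exact Finset.sum_congr rfl fun i _ => by ring
  rw [h11, h12, h21, hcw]
  have hrhs : (A.mulVec xv + uv • B) ⬝ᵥ X.mulVec (A.mulVec xv + uv • B)
      = (A.mulVec xv) ⬝ᵥ X.mulVec (A.mulVec xv) + uv * ((A.mulVec xv) ⬝ᵥ X.mulVec B)
        + uv * (B ⬝ᵥ X.mulVec (A.mulVec xv)) + uv * (uv * (B ⬝ᵥ X.mulVec B)) := by
    simp only [mulVec_add, mulVec_smul, dotProduct_add, add_dotProduct,
      dotProduct_smul, smul_dotProduct, smul_eq_mul]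
    ring
  rw [hrhs, hBXA]
  ring


/-- Case C of Theorem 2: the KYP-type LMI (bounded-real lemma form with block
sizes (n,1,1)) certifies that the state-space system `(A, B, cᵀ, D)` has ℓ₂
gain at most `α`. -/
theorem stmt8 (n : ℕ) (A : Matrix (Fin n) (Fin n) ℝ) (B c : Fin n → ℝ)
    (D α : ℝ) (hα : 0 < α)
    (hX : ∃ X : Matrix (Fin n) (Fin n) ℝ, X.PosDef ∧
      (-(Matrix.fromBlocks
        (Matrix.fromBlocks
          (Aᵀ * X * A - X)
          (Matrix.of fun i (_ : Fin 1) => Aᵀ.mulVec (X.mulVec B) i)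
          (Matrix.of fun (_ : Fin 1) j => Aᵀ.mulVec (X.mulVec B) j)
          (Matrix.of fun (_ _ : Fin 1) => B ⬝ᵥ X.mulVec B - α ^ 2))
        (Matrix.of fun (i : Fin n ⊕ Fin 1) (_ : Fin 1) =>
          Sum.elim (fun j => c j) (fun _ => D) i)
        (Matrix.of fun (_ : Fin 1) (j : Fin n ⊕ Fin 1) =>
          Sum.elim (fun j => c j) (fun _ => D) j)
        (Matrix.of fun (_ _ : Fin 1) => (-1 : ℝ)))).PosDef) :
    ∀ (u : ℕ → ℝ) (x : ℕ → Fin n → ℝ) (y : ℕ → ℝ),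
      x 0 = 0 →
      (∀ t, x (t + 1) = A.mulVec (x t) + u t • B) →
      (∀ t, y t = c ⬝ᵥ x t + D * u t) →
      ∀ tf : ℕ,
        ∑ t ∈ Finset.range (tf + 1), (y t) ^ 2 ≤
          α ^ 2 * ∑ t ∈ Finset.range (tf + 1), (u t) ^ 2 := by
  obtain ⟨X, hXpd, hM⟩ := hX
  intro u x y hx0 hstep hy
  have key : ∀ t, y t ^ 2 + (x (t + 1)) ⬝ᵥ X.mulVec (x (t + 1))
      ≤ x t ⬝ᵥ X.mulVec (x t) + α ^ 2 * u t ^ 2 := by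
    intro t
    set z : (Fin n ⊕ Fin 1) ⊕ Fin 1 → ℝ :=
      Sum.elim (Sum.elim (x t) (fun _ => u t)) (fun _ => y t) with hzdef
    have hq := quadform n A X B c D α hXpd.1 (x t) (u t) (y t)
    rw [← hy t] at hq
    rw [show 2 * y t * y t = 2 * y t ^ 2 by ring] at hq
    by_cases hz0 : z = 0
    · have hxt : x t = 0 := funext fun i => congrFun hz0 (Sum.inl (Sum.inl i))
      have hut : u t = 0 := congrFun hz0 (Sum.inl (Sum.inr 0))
      have hyt : y t = 0 := congrFun hz0 (Sum.inr 0)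
      rw [hstep t, hxt, hut, hyt]
      simp
    · have hpos := hM.dotProduct_mulVec_pos hz0
      simp only [star_trivial] at hpos
      rw [neg_mulVec, dotProduct_neg] at hpos
      have hlt := neg_pos.mp hpos
      rw [hzdef, hq] at hlt
      rw [hstep t]
      linarith
  have hsum : ∀ tf, (∑ t ∈ Finset.range (tf + 1), y t ^ 2)
      + x (tf + 1) ⬝ᵥ X.mulVec (x (tf + 1))
      ≤ α ^ 2 * ∑ t ∈ Finset.range (tf + 1), u t ^ 2 := by
    intro tf
    induction tf with
    | zero =>
      have h0 := key 0
      rw [hx0] at h0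
      simpa [Finset.sum_range_one] using h0
    | succ k ih =>
      rw [Finset.sum_range_succ, Finset.sum_range_succ (fun t => u t ^ 2)]
      have hk := key (k + 1)
      rw [mul_add]
      linarith
  intro tf
  have hV : 0 ≤ x (tf + 1) ⬝ᵥ X.mulVec (x (tf + 1)) := by
    have := hXpd.posSemidef.dotProduct_mulVec_nonneg (x (tf + 1))
    simpa [star_trivial] using this
  linarith [hsum tf]
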